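/- For the 2x2 case (λ_t = 1 exactly for two periods ℓ' < s ≤ ℓ), the pairwise matched 2WFE estimator reduces to τ̂(w^s,λ) = (1/N_s) Σ_i [1(t_i*=s) − 1(t_i*=∞)K_M(i,s)/M]·(Y_{iℓ} − Y_{iℓ'}). -/

import Mathlib

open Finset

lemma sum_pair_ite {T ℓ ℓ' : ℕ} (h' : ℓ' ∈ Finset.Icc 1 T) (h : ℓ ∈ Finset.Icc 1 T)
    (hne : ℓ' ≠ ℓ) (f : ℕ → ℝ) :
    ∑ t ∈ Finset.Icc 1 T, (if t = ℓ' ∨ t = ℓ then f t else 0) = f ℓ' + f ℓ := by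
  rw [← Finset.sum_subset (s₁ := ({ℓ', ℓ} : Finset ℕ))
      (by intro x hx; simp at hx; rcases hx with h1 | h1 <;> simp [h1, h', h])
      (fun x _ hx => by simp at hx; simp [hx.1, hx.2])]
  rw [Finset.sum_pair hne]
  simp [hne]

noncomputable section

/-- Treatment indicator `D_{it} = 1(t ≥ t_i*)`. -/
def Dit {n : ℕ} (tstar : Fin n → ℕ∞) (i : Fin n) (t : ℕ) : ℝ :=
  if tstar i ≤ (t : ℕ∞) then 1 else 0

/-- Unit-level λ-weighted mean of treatment: `D̄_i`. -/
def DbarI {n : ℕ} (T : ℕ) (lam : ℕ → ℝ) (tstar : Fin n → ℕ∞) (i : Fin n) : ℝ :=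
  (∑ t ∈ Finset.Icc 1 T, lam t * Dit tstar i t) / (∑ t ∈ Finset.Icc 1 T, lam t)

/-- Period-level w-weighted mean of treatment: `D̃_t`. -/
def DtildeT {n : ℕ} (w : Fin n → ℝ) (tstar : Fin n → ℕ∞) (t : ℕ) : ℝ :=
  (∑ i, w i * Dit tstar i t) / (∑ i, w i)

/-- Overall weighted mean of treatment: `D̄`. -/
def Dbar {n : ℕ} (T : ℕ) (w : Fin n → ℝ) (lam : ℕ → ℝ) (tstar : Fin n → ℕ∞) : ℝ :=
  (∑ i, ∑ t ∈ Finset.Icc 1 T, w i * lam t * Dit tstar i t) /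
    ((∑ i, w i) * (∑ t ∈ Finset.Icc 1 T, lam t))

/-- Demeaned treatment `D̈_{it} = D_{it} − D̄_i − D̃_t + D̄`. -/
def Ddot {n : ℕ} (T : ℕ) (w : Fin n → ℝ) (lam : ℕ → ℝ) (tstar : Fin n → ℕ∞)
    (i : Fin n) (t : ℕ) : ℝ :=
  Dit tstar i t - DbarI T lam tstar i - DtildeT w tstar t + Dbar T w lam tstar

/-- Weighted cohort share `p̂_c^w` (cohort `c ∈ ℕ∞`, with `⊤` the never treated). -/
def phat {n : ℕ} (w : Fin n → ℝ) (tstar : Fin n → ℕ∞) (c : ℕ∞) : ℝ :=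
  (∑ i, w i * (if tstar i = c then 1 else 0)) / (∑ i, w i)

/-- Share of included periods `t ≥ u`: `Λ_u`. -/
def Lam (T : ℕ) (lam : ℕ → ℝ) (u : ℕ) : ℝ :=
  (∑ t ∈ Finset.Icc 1 T, lam t * (if u ≤ t then 1 else 0)) / (∑ t ∈ Finset.Icc 1 T, lam t)

/-- Weighted two-way fixed effects estimator `τ̂(w, λ)`. -/
def tauhat {n : ℕ} (T : ℕ) (w : Fin n → ℝ) (lam : ℕ → ℝ) (tstar : Fin n → ℕ∞)
    (Y : Fin n → ℕ → ℝ) : ℝ :=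
  (∑ i, ∑ t ∈ Finset.Icc 1 T, w i * lam t * Y i t * Ddot T w lam tstar i t) /
    (∑ i, ∑ t ∈ Finset.Icc 1 T, w i * lam t * Dit tstar i t * Ddot T w lam tstar i t)

end

/-- In the 2x2 case, where `λ_t = 1` exactly for two periods
`ℓ' < s ≤ ℓ`, the pairwise matched 2WFE estimator reduces to
`(1/N_s) Σ_i [1(t_i*=s) − 1(t_i*=∞) K_M(i,s)/M]·(Y_{iℓ} − Y_{iℓ'})`. -/
theorem statement8 {n T : ℕ} (s M ℓ ℓ' : ℕ) (tstar : Fin n → ℕ∞)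
    (Y : Fin n → ℕ → ℝ) (K : Fin n → ℕ)
    (hs : s ∈ Finset.Icc 2 T) (hM : 1 ≤ M)
    (hℓ'1 : 1 ≤ ℓ') (hℓ's : ℓ' < s) (hsℓ : s ≤ ℓ) (hℓT : ℓ ≤ T)
    (hNs : 0 < (Finset.univ.filter (fun i => tstar i = (s : ℕ∞))).card)
    (hK : (∑ i, if tstar i = ⊤ then K i else 0)
      = (Finset.univ.filter (fun i => tstar i = (s : ℕ∞))).card * M) :
    tauhat T
        (fun i => (if tstar i = (s : ℕ∞) then (1 : ℝ) else 0)
          + (if tstar i = ⊤ then (K i : ℝ) / M else 0))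
        (fun t => if t = ℓ' ∨ t = ℓ then (1 : ℝ) else 0) tstar Y
      = (1 / ((Finset.univ.filter (fun i => tstar i = (s : ℕ∞))).card : ℝ)) *
          ∑ i, ((if tstar i = (s : ℕ∞) then (1 : ℝ) else 0)
              - (if tstar i = ⊤ then (K i : ℝ) / M else 0)) * (Y i ℓ - Y i ℓ') := by
  simp only [Finset.mem_Icc] at hs
  set Ns := (Finset.univ.filter (fun i => tstar i = (s : ℕ∞))).card with hNsdef
  set w := fun i => (if tstar i = (s : ℕ∞) then (1 : ℝ) else 0)
          + (if tstar i = ⊤ then (K i : ℝ) / M else 0) with hwdef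
  set lam := fun t => if t = ℓ' ∨ t = ℓ then (1 : ℝ) else 0 with hlamdef
  set Nr : ℝ := (Ns : ℝ) with hNrdef
  have hNr : (0:ℝ) < Nr := Nat.cast_pos.mpr hNs
  have hNr0 : Nr ≠ 0 := ne_of_gt hNr
  have hM0 : (M:ℝ) ≠ 0 := by positivity
  have hℓ'mem : ℓ' ∈ Finset.Icc 1 T := by simp only [Finset.mem_Icc]; omega
  have hℓmem : ℓ ∈ Finset.Icc 1 T := by simp only [Finset.mem_Icc]; omega
  have hne : ℓ' ≠ ℓ := by omega
  -- basic Dit facts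
  have hDit_s_ℓ : ∀ i, tstar i = (s:ℕ∞) → Dit tstar i ℓ = 1 := by
    intro i h; simp [Dit, h, Nat.cast_le, hsℓ]
  have hDit_s_ℓ' : ∀ i, tstar i = (s:ℕ∞) → Dit tstar i ℓ' = 0 := by
    intro i h
    simp only [Dit, h]
    rw [if_neg]
    exact fun hc => absurd (Nat.cast_le.mp hc) (by omega)
  have hDit_top : ∀ i t, tstar i = ⊤ → Dit tstar i t = 0 := by
    intro i t h; simp [Dit, h]
  have tri : ∀ i : Fin n, tstar i = (s:ℕ∞) ∨ tstar i = ⊤ ∨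
      (tstar i ≠ (s:ℕ∞) ∧ tstar i ≠ ⊤) := by tauto
  -- weight facts
  have hw_s : ∀ i, tstar i = (s:ℕ∞) → w i = 1 := by
    intro i h; simp [hwdef, h]
  have hw_top : ∀ i, tstar i = ⊤ → w i = (K i : ℝ) / M := by
    intro i h; simp [hwdef, h]
  have hw_0 : ∀ i, (tstar i ≠ (s:ℕ∞) ∧ tstar i ≠ ⊤) → w i = 0 := by
    intro i h; simp [hwdef, h.1, h.2]
  -- sums over units
  have hsum_s : ∑ i, (if tstar i = (s:ℕ∞) then (1:ℝ) else 0) = Nr := by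
    rw [Finset.sum_boole, hNrdef, hNsdef]
  have hsum_K : ∑ i, (if tstar i = ⊤ then (K i:ℝ)/M else 0) = Nr := by
    have h1 : ∑ i, (if tstar i = ⊤ then (K i:ℝ) else 0) = (Ns : ℝ) * M := by
      calc ∑ i, (if tstar i = ⊤ then (K i:ℝ) else 0)
          = ((∑ i, if tstar i = ⊤ then K i else 0 : ℕ) : ℝ) := by push_cast; rfl
        _ = (Ns:ℝ) * M := by rw [hK]; push_cast; ring
    calc ∑ i, (if tstar i = ⊤ then (K i:ℝ)/M else 0)
        = (∑ i, (if tstar i = ⊤ then (K i:ℝ) else 0)) / M := by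
          rw [Finset.sum_div]
          exact Finset.sum_congr rfl fun i _ => by split <;> simp
      _ = Nr := by rw [h1]; field_simp; exact hNrdef.symm
  have hW : ∑ i, w i = 2 * Nr := by
    simp only [hwdef]
    rw [Finset.sum_add_distrib, hsum_s, hsum_K]; ring
  have hA0 : ∑ i, w i * Dit tstar i ℓ' = 0 := by
    apply Finset.sum_eq_zero
    intro i _
    rcases tri i with h | h | h
    · rw [hDit_s_ℓ' i h, mul_zero]
    · rw [hDit_top i ℓ' h, mul_zero]
    · rw [hw_0 i h, zero_mul]
  have hA1 : ∑ i, w i * Dit tstar i ℓ = Nr := by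
    rw [← hsum_s]
    refine Finset.sum_congr rfl fun i _ => ?_
    rcases tri i with h | h | h
    · rw [hw_s i h, hDit_s_ℓ i h, if_pos h]; ring
    · rw [hDit_top i ℓ h, mul_zero, if_neg (by rw [h]; simp)]
    · rw [hw_0 i h, zero_mul, if_neg h.1]
  -- lambda sum
  have hΛ : ∑ t ∈ Finset.Icc 1 T, lam t = 2 := by
    simp only [hlamdef]
    have h2 : (∑ t ∈ Finset.Icc 1 T, if t = ℓ' ∨ t = ℓ then (1:ℝ) else 0) = 1 + 1 :=
      sum_pair_ite hℓ'mem hℓmem hne (fun _ => 1)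
    rw [h2]; norm_num
  -- DbarI values
  have hDbarI_s : ∀ i, tstar i = (s:ℕ∞) → DbarI T lam tstar i = 1/2 := by
    intro i h
    have h1 : ∑ t ∈ Finset.Icc 1 T, lam t * Dit tstar i t
        = Dit tstar i ℓ' + Dit tstar i ℓ := by
      rw [← sum_pair_ite hℓ'mem hℓmem hne (fun t => Dit tstar i t)]
      refine Finset.sum_congr rfl fun t _ => ?_
      simp only [hlamdef]
      split <;> simp
    unfold DbarI
    rw [h1, hΛ, hDit_s_ℓ' i h, hDit_s_ℓ i h]; norm_num
  have hDbarI_top : ∀ i, tstar i = ⊤ → DbarI T lam tstar i = 0 := by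
    intro i h
    unfold DbarI
    rw [Finset.sum_eq_zero fun t _ => by rw [hDit_top i t h, mul_zero]]
    simp
  -- DtildeT values
  have hDt0 : DtildeT w tstar ℓ' = 0 := by
    unfold DtildeT; rw [hA0]; simp
  have hDt1 : DtildeT w tstar ℓ = 1/2 := by
    unfold DtildeT; rw [hA1, hW]
    field_simp
  -- Dbar value
  have hDb : Dbar T w lam tstar = 1/4 := by
    unfold Dbar
    have h1 : ∀ i : Fin n, ∑ t ∈ Finset.Icc 1 T, w i * lam t * Dit tstar i t
        = w i * Dit tstar i ℓ' + w i * Dit tstar i ℓ := by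
      intro i
      rw [← sum_pair_ite hℓ'mem hℓmem hne (fun t => w i * Dit tstar i t)]
      refine Finset.sum_congr rfl fun t _ => ?_
      simp only [hlamdef]
      split <;> simp
    simp only [h1]
    rw [Finset.sum_add_distrib, hA0, hA1, hW, hΛ]
    rw [zero_add]
    field_simp
    ring
  -- Ddot values
  have hDd_s_ℓ' : ∀ i, tstar i = (s:ℕ∞) → Ddot T w lam tstar i ℓ' = -(1/4) := by
    intro i h; unfold Ddot
    rw [hDit_s_ℓ' i h, hDbarI_s i h, hDt0, hDb]; norm_num
  have hDd_s_ℓ : ∀ i, tstar i = (s:ℕ∞) → Ddot T w lam tstar i ℓ = 1/4 := by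
    intro i h; unfold Ddot
    rw [hDit_s_ℓ i h, hDbarI_s i h, hDt1, hDb]; norm_num
  have hDd_t_ℓ' : ∀ i, tstar i = ⊤ → Ddot T w lam tstar i ℓ' = 1/4 := by
    intro i h; unfold Ddot
    rw [hDit_top i ℓ' h, hDbarI_top i h, hDt0, hDb]; norm_num
  have hDd_t_ℓ : ∀ i, tstar i = ⊤ → Ddot T w lam tstar i ℓ = -(1/4) := by
    intro i h; unfold Ddot
    rw [hDit_top i ℓ h, hDbarI_top i h, hDt1, hDb]; norm_num
  -- reduce inner time sums
  have hinner : ∀ (g : ℕ → ℝ) (i : Fin n),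
      ∑ t ∈ Finset.Icc 1 T, w i * lam t * g t * Ddot T w lam tstar i t
      = w i * g ℓ' * Ddot T w lam tstar i ℓ' + w i * g ℓ * Ddot T w lam tstar i ℓ := by
    intro g i
    rw [← sum_pair_ite hℓ'mem hℓmem hne (fun t => w i * g t * Ddot T w lam tstar i t)]
    refine Finset.sum_congr rfl fun t _ => ?_
    simp only [hlamdef]
    split <;> simp
  unfold tauhat
  have hnum : ∑ i, ∑ t ∈ Finset.Icc 1 T, w i * lam t * Y i t * Ddot T w lam tstar i t
      = (1/4) * ∑ i, ((if tstar i = (s:ℕ∞) then (1:ℝ) else 0)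
          - (if tstar i = ⊤ then (K i:ℝ)/M else 0)) * (Y i ℓ - Y i ℓ') := by
    rw [Finset.mul_sum]
    refine Finset.sum_congr rfl fun i _ => ?_
    rw [hinner (Y i) i]
    rcases tri i with h | h | h
    · rw [hw_s i h, hDd_s_ℓ' i h, hDd_s_ℓ i h, if_pos h, if_neg (by rw [h]; simp)]; ring
    · rw [hw_top i h, hDd_t_ℓ' i h, hDd_t_ℓ i h, if_pos h, if_neg (by rw [h]; simp)]; ring
    · rw [hw_0 i h, if_neg h.1, if_neg h.2]; ring
  have hden : ∑ i, ∑ t ∈ Finset.Icc 1 T, w i * lam t * Dit tstar i t * Ddot T w lam tstar i t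
      = (1/4) * Nr := by
    have hpt : ∀ i : Fin n, ∑ t ∈ Finset.Icc 1 T,
        w i * lam t * Dit tstar i t * Ddot T w lam tstar i t
        = (1/4) * (if tstar i = (s:ℕ∞) then (1:ℝ) else 0) := by
      intro i
      rw [hinner (Dit tstar i) i]
      rcases tri i with h | h | h
      · rw [hw_s i h, hDit_s_ℓ' i h, hDit_s_ℓ i h, hDd_s_ℓ i h, if_pos h]; ring
      · rw [hDit_top i ℓ' h, hDit_top i ℓ h, if_neg (by rw [h]; simp)]; ring
      · rw [hw_0 i h, if_neg h.1]; ring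
    rw [Finset.sum_congr rfl fun i _ => hpt i, ← Finset.mul_sum, hsum_s]
  rw [hnum, hden, mul_div_mul_left _ _ (by norm_num : (1/4:ℝ) ≠ 0)]
  rw [one_div, inv_mul_eq_div]
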